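/- The 2×2 real matrix with entries [[1/2, 1/7], [1/7, 1/24]] is positive semi-definite, but the 2×2 matrix [[ζ(2), ζ(7)], [ζ(7), ζ(12)/2]] is not positive semi-definite. -/

import Mathlib

open Complex ComplexOrder

lemma zeta_real_aux {k : ℕ} (hk : 1 < k) :
    riemannZeta k = ((∑' n : ℕ, 1 / (n : ℝ) ^ k : ℝ) : ℂ) := by
  rw [zeta_nat_eq_tsum_of_gt_one hk, Complex.ofReal_tsum]
  push_cast
  rfl

lemma Z7_ge_aux : (1 : ℝ) ≤ ∑' n : ℕ, 1 / (n : ℝ) ^ 7 := by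
  have hs : Summable (fun n : ℕ => 1 / (n : ℝ) ^ 7) :=
    Real.summable_one_div_nat_pow.mpr (by norm_num)
  have := hs.le_tsum 1 (fun j _ => by positivity)
  simpa using this

lemma Z12_le_aux : ∑' n : ℕ, 1 / (n : ℝ) ^ 12 ≤ 1 + (Real.pi ^ 2 / 6 - 1) / 1024 := by
  have h12 : Summable (fun n : ℕ => 1 / (n : ℝ) ^ 12) :=
    Real.summable_one_div_nat_pow.mpr (by norm_num)
  have h2 : Summable (fun n : ℕ => 1 / (n : ℝ) ^ 2) :=
    Real.summable_one_div_nat_pow.mpr (by norm_num)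
  have e12 := h12.sum_add_tsum_nat_add 2
  have e2 := h2.sum_add_tsum_nat_add 2
  have key : ∑' n : ℕ, 1 / ((n : ℕ) + 2 : ℝ) ^ 12 ≤ ∑' n : ℕ, (1/1024) * (1 / ((n : ℕ) + 2 : ℝ) ^ 2) := by
    apply Summable.tsum_le_tsum
    · intro n
      have hn : (2 : ℝ) ≤ (n : ℝ) + 2 := by linarith [Nat.cast_nonneg (α := ℝ) n]
      calc 1 / ((n : ℝ) + 2) ^ 12 = 1 / (((n:ℝ)+2)^10 * ((n:ℝ)+2)^2) := by ring_nf
        _ ≤ 1 / ((2:ℝ)^10 * ((n:ℝ)+2)^2) := by gcongr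
        _ = (1/1024) * (1 / ((n : ℝ) + 2) ^ 2) := by rw [one_div, mul_inv]; norm_num
    · have := (summable_nat_add_iff 2).mpr h12
      simpa using this
    · have := ((summable_nat_add_iff 2).mpr h2).mul_left (1/1024 : ℝ)
      simpa using this
  have hz2 : ∑' n : ℕ, 1 / (n : ℝ) ^ 2 = Real.pi ^ 2 / 6 := hasSum_zeta_two.tsum_eq
  rw [tsum_mul_left] at key
  have hsum2 : ∑ i ∈ Finset.range 2, 1 / ((i:ℝ)) ^ 2 = 1 := by
    simp [Finset.sum_range_succ]
  have hsum12 : ∑ i ∈ Finset.range 2, 1 / ((i:ℝ)) ^ 12 = 1 := by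
    simp [Finset.sum_range_succ]
  push_cast at e12 e2
  rw [hsum2, hz2] at e2
  rw [hsum12] at e12
  nlinarith [key, e12, e2]

theorem pick_matrix_psd_but_zeta_matrix_not :
    Matrix.PosSemidef (!![(1 : ℝ) / 2, 1 / 7; 1 / 7, 1 / 24]) ∧
    ¬ Matrix.PosSemidef (!![riemannZeta 2, riemannZeta 7;
                            riemannZeta 7, riemannZeta 12 / 2]) := by
  constructor
  · rw [Matrix.posSemidef_iff_dotProduct_mulVec]; constructor
    · ext i j
      fin_cases i <;> fin_cases j <;>
        simp [Matrix.conjTranspose, Matrix.vecHead, Matrix.vecTail]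
    · intro x
      simp [Matrix.mulVec, dotProduct, Fin.sum_univ_two]
      nlinarith [sq_nonneg (x 0 + 2/7 * x 1), sq_nonneg (x 1)]
  · intro hP
    have hq := (Matrix.posSemidef_iff_dotProduct_mulVec.mp hP).2 ![1, -2]
    set Z7 : ℝ := ∑' n : ℕ, 1 / (n : ℝ) ^ 7 with hZ7
    set Z12 : ℝ := ∑' n : ℕ, 1 / (n : ℝ) ^ 12 with hZ12
    have h7 : riemannZeta 7 = (Z7 : ℂ) := by
      rw [show (7 : ℂ) = ((7 : ℕ) : ℂ) by norm_num]
      exact zeta_real_aux (by norm_num)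
    have h12 : riemannZeta 12 = (Z12 : ℂ) := by
      rw [show (12 : ℂ) = ((12 : ℕ) : ℂ) by norm_num]
      exact zeta_real_aux (by norm_num)
    have hform : dotProduct (star ![1, -2])
        ((!![riemannZeta 2, riemannZeta 7; riemannZeta 7, riemannZeta 12 / 2]).mulVec ![1, -2])
        = ((Real.pi ^ 2 / 6 - 4 * Z7 + 2 * Z12 : ℝ) : ℂ) := by
      simp [Matrix.mulVec, dotProduct, Fin.sum_univ_two, riemannZeta_two, h7, h12, map_ofNat]
      ring
    rw [hform] at hq
    have hre : (0 : ℝ) ≤ Real.pi ^ 2 / 6 - 4 * Z7 + 2 * Z12 := by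
      exact Complex.zero_le_real.mp hq
    nlinarith [Z7_ge_aux, Z12_le_aux, Real.pi_lt_d2, Real.pi_pos]
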